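/- Let θ ∈ ℝ^d with θ ≠ 0 and let α, λ > 0. The function z ↦ (1/2)‖z − θ‖₂² + αλ‖z‖₂ on ℝ^d attains its unique minimum at z* = θ · (1 − αλ/‖θ‖₂)^+, where (x)^+ := max(x, 0) and ‖·‖₂ is the Euclidean norm. -/

import Mathlib

/-- For `θ ∈ ℝ^d` with `θ ≠ 0` and `α, λ > 0`, the function
`z ↦ (1/2)‖z − θ‖₂² + αλ‖z‖₂` attains its unique minimum at
`z* = θ · (1 − αλ/‖θ‖₂)^+`. -/
theorem groupLasso_prox_is_unique_min (d : ℕ) (θ : EuclideanSpace ℝ (Fin d))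
    (hθ : θ ≠ 0) (α lam : ℝ) (hα : 0 < α) (hlam : 0 < lam) :
    ∀ z : EuclideanSpace ℝ (Fin d), z ≠ (max (1 - α * lam / ‖θ‖) 0) • θ →
      (1 / 2) * ‖(max (1 - α * lam / ‖θ‖) 0) • θ - θ‖ ^ 2 +
          α * lam * ‖(max (1 - α * lam / ‖θ‖) 0) • θ‖ <
        (1 / 2) * ‖z - θ‖ ^ 2 + α * lam * ‖z‖ := by
  intro z hz
  have hcpos : 0 < α * lam := mul_pos hα hlam
  set c := α * lam with hc
  have ht : 0 < ‖θ‖ := norm_pos_iff.mpr hθ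
  set t := ‖θ‖ with htdef
  have hzexp : ‖z - θ‖ ^ 2 = ‖z‖ ^ 2 - 2 * (inner ℝ z θ : ℝ) + t ^ 2 :=
    norm_sub_sq_real z θ
  have hCS : (inner ℝ z θ : ℝ) ≤ ‖z‖ * t := real_inner_le_norm z θ
  rcases le_or_gt t c with hcase | hcase
  · -- shrinkage to zero
    have hm : max (1 - c / t) 0 = 0 := by
      apply max_eq_right
      have : (1 : ℝ) ≤ c / t := (one_le_div ht).mpr hcase
      linarith
    rw [hm] at hz ⊢
    rw [zero_smul] at hz ⊢
    have hzn : 0 < ‖z‖ := norm_pos_iff.mpr hz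
    have h0 : ‖(0 : EuclideanSpace ℝ (Fin d)) - θ‖ = t := by simp [htdef]
    rw [h0, norm_zero, hzexp]
    have h2 : ‖z‖ * t ≤ ‖z‖ * c := mul_le_mul_of_nonneg_left hcase (norm_nonneg z)
    nlinarith
  · -- partial shrinkage
    have h1 : (0:ℝ) ≤ 1 - c / t := by
      rw [sub_nonneg]
      exact (div_le_one ht).mpr hcase.le
    have hm : max (1 - c / t) 0 = 1 - c / t := max_eq_left h1
    rw [hm] at hz ⊢
    have hms : ((1 - c / t) • θ : EuclideanSpace ℝ (Fin d)) - θ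
        = (-(c / t)) • θ := by
      module
    have hn1 : ‖((1 - c / t) • θ : EuclideanSpace ℝ (Fin d)) - θ‖ = c / t * t := by
      rw [hms, norm_smul, norm_neg, Real.norm_eq_abs,
        abs_of_nonneg (by positivity : (0:ℝ) ≤ c / t)]
    have hn2 : ‖((1 - c / t) • θ : EuclideanSpace ℝ (Fin d))‖ = (1 - c / t) * t := by
      rw [norm_smul, Real.norm_eq_abs, abs_of_nonneg h1]
    rw [hn1, hn2, hzexp]
    have hct : c / t * t = c := div_mul_cancel₀ c ht.ne'
    rcases lt_or_eq_of_le hCS with hlt | heq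
    · nlinarith [sq_nonneg (‖z‖ - t + c)]
    · -- equality in Cauchy–Schwarz: z is a nonnegative multiple of θ
      have hzθ : t • z = ‖z‖ • θ := inner_eq_norm_mul_iff_real.mp heq
      have hne : ‖z‖ ≠ t - c := by
        intro hr
        apply hz
        have : z = (‖z‖ / t) • θ := by
          have := congrArg (fun w => (t⁻¹ : ℝ) • w) hzθ
          simpa [smul_smul, inv_mul_cancel₀ ht.ne', div_eq_inv_mul, mul_comm] using this
        rw [this, hr]
        congr 1
        field_simp
      have hsq : 0 < (‖z‖ - t + c) ^ 2 := by
        have : ‖z‖ - t + c ≠ 0 := fun h0 => hne (by linarith)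
        positivity
      nlinarith
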